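/- For all real s ≥ 15/2, the quantity |(√2 s^2 e^s/(3π)) ∫_1^∞ (2u^(3/2) - (3/2)u^(5/2) + (3/16)u^(7/2) + (1/64)u^(9/2) + (3/1024)u^(11/2) + (3/4096)u^(13/2)) e^{-su} du| ≤ 30595 s / (4096 √2 π). -/

import Mathlib

open Real MeasureTheory

lemma integ_aux (p s : ℝ) (hp : 0 ≤ p) (hs : 0 < s) :
    IntegrableOn (fun u : ℝ => u ^ p * Real.exp (-(s * u))) (Set.Ioi 1) := by
  have h := integrableOn_rpow_mul_exp_neg_mul_rpow (p := 1) (s := p) (b := s)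
    (by linarith) zero_lt_one hs
  simp only [Real.rpow_one, neg_mul] at h
  exact h.mono_set (Set.Ioi_subset_Ioi (by norm_num))

lemma int_exp_Ioi_one (c : ℝ) (hc : 0 < c) :
    ∫ u in Set.Ioi (1 : ℝ), Real.exp (-(c * u)) = Real.exp (-c) / c := by
  have hderiv : ∀ u ∈ Set.Ioi (1 : ℝ),
      HasDerivAt (fun u : ℝ => -(Real.exp (-(c * u)) / c)) (Real.exp (-(c * u))) u := by
    intro u _
    have h := (((hasDerivAt_id u).const_mul c).neg.exp.div_const c).neg
    convert h using 1
    · rfl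
    · rfl
    · ext x; simp
    · simp; field_simp
  have hcont : ContinuousWithinAt (fun u : ℝ => -(Real.exp (-(c * u)) / c)) (Set.Ici 1) 1 :=
    (((Real.continuous_exp.comp ((continuous_const.mul continuous_id).neg)).div_const
      c).neg).continuousWithinAt
  have hint : IntegrableOn (fun u : ℝ => Real.exp (-(c * u))) (Set.Ioi 1) := by
    have := exp_neg_integrableOn_Ioi 1 hc
    simpa [neg_mul] using this
  have htend : Filter.Tendsto (fun u : ℝ => -(Real.exp (-(c * u)) / c)) Filter.atTop (nhds 0) := by
    have h1 : Filter.Tendsto (fun u : ℝ => c * u) Filter.atTop Filter.atTop :=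
      Filter.Tendsto.const_mul_atTop hc Filter.tendsto_id
    have h2 : Filter.Tendsto (fun u : ℝ => Real.exp (-(c * u))) Filter.atTop (nhds 0) :=
      Real.tendsto_exp_atBot.comp (Filter.tendsto_neg_atTop_atBot.comp h1)
    have := (h2.div_const c).neg
    simpa using this
  have := integral_Ioi_of_hasDerivAt_of_tendsto hcont hderiv hint htend
  rw [this]
  ring

lemma J_le (p s : ℝ) (hp : 0 ≤ p) (hs : p + 1 ≤ s) :
    ∫ u in Set.Ioi (1 : ℝ), u ^ p * Real.exp (-(s * u)) ≤ (p + 1) * (Real.exp (-s) / s) := by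
  have hs0 : 0 < s := by linarith
  have hsp : 0 < s - p := by linarith
  have hbound : ∀ u ∈ Set.Ioi (1 : ℝ),
      u ^ p * Real.exp (-(s * u)) ≤ Real.exp (-p) * Real.exp (-((s - p) * u)) := by
    intro u hu
    have hu1 : (1 : ℝ) < u := hu
    have hu0 : (0 : ℝ) < u := by linarith
    have hlog : Real.log u ≤ u - 1 := Real.log_le_sub_one_of_pos hu0
    rw [Real.rpow_def_of_pos hu0, ← Real.exp_add, ← Real.exp_add]
    apply Real.exp_le_exp.2
    nlinarith [mul_le_mul_of_nonneg_left hlog hp]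
  have hgint : IntegrableOn (fun u : ℝ => Real.exp (-p) * Real.exp (-((s - p) * u)))
      (Set.Ioi 1) := by
    have := exp_neg_integrableOn_Ioi 1 hsp
    simp only [neg_mul] at this
    exact this.const_mul _
  have h1 : ∫ u in Set.Ioi (1 : ℝ), u ^ p * Real.exp (-(s * u))
      ≤ ∫ u in Set.Ioi (1 : ℝ), Real.exp (-p) * Real.exp (-((s - p) * u)) :=
    setIntegral_mono_on (integ_aux p s hp hs0) hgint measurableSet_Ioi hbound
  have h2 : ∫ u in Set.Ioi (1 : ℝ), Real.exp (-p) * Real.exp (-((s - p) * u))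
      = Real.exp (-s) / (s - p) := by
    rw [integral_const_mul, int_exp_Ioi_one (s - p) hsp, ← mul_div_assoc, ← Real.exp_add,
      show -p + -(s - p) = -s by ring]
  have h3 : Real.exp (-s) / (s - p) ≤ (p + 1) * Real.exp (-s) / s := by
    rw [div_le_div_iff₀ hsp hs0]
    nlinarith [Real.exp_pos (-s), mul_nonneg hp (by linarith : (0:ℝ) ≤ s - p - 1),
      mul_nonneg (mul_nonneg hp (by linarith : (0:ℝ) ≤ s - p - 1)) (Real.exp_pos (-s)).le]
  have h4 : (p + 1) * Real.exp (-s) / s = (p + 1) * (Real.exp (-s) / s) := by ring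
  linarith

set_option maxHeartbeats 1000000 in
theorem gamma_tail_integral_bound (s : ℝ) (hs : 15/2 ≤ s) :
    |Real.sqrt 2 * s^2 * Real.exp s / (3 * π) *
      ∫ u in Set.Ioi (1:ℝ),
        (2 * u ^ ((3:ℝ)/2) - (3/2) * u ^ ((5:ℝ)/2) + (3/16) * u ^ ((7:ℝ)/2)
          + (1/64) * u ^ ((9:ℝ)/2) + (3/1024) * u ^ ((11:ℝ)/2)
          + (3/4096) * u ^ ((13:ℝ)/2)) * Real.exp (-(s * u))|
    ≤ 30595 * s / (4096 * Real.sqrt 2 * π) := by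
  have hs0 : (0 : ℝ) < s := by linarith
  have i1 := integ_aux ((3:ℝ)/2) s (by norm_num) hs0
  have i2 := integ_aux ((5:ℝ)/2) s (by norm_num) hs0
  have i3 := integ_aux ((7:ℝ)/2) s (by norm_num) hs0
  have i4 := integ_aux ((9:ℝ)/2) s (by norm_num) hs0
  have i5 := integ_aux ((11:ℝ)/2) s (by norm_num) hs0
  have i6 := integ_aux ((13:ℝ)/2) s (by norm_num) hs0
  set g : ℝ → ℝ := fun u => 2 * (u ^ ((3:ℝ)/2) * Real.exp (-(s * u)))
      + ((3/2) * (u ^ ((5:ℝ)/2) * Real.exp (-(s * u)))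
      + ((3/16) * (u ^ ((7:ℝ)/2) * Real.exp (-(s * u)))
      + ((1/64) * (u ^ ((9:ℝ)/2) * Real.exp (-(s * u)))
      + ((3/1024) * (u ^ ((11:ℝ)/2) * Real.exp (-(s * u)))
      + (3/4096) * (u ^ ((13:ℝ)/2) * Real.exp (-(s * u))))))) with hg_def
  have hgint : IntegrableOn g (Set.Ioi 1) :=
    (i1.const_mul _).add ((i2.const_mul _).add ((i3.const_mul _).add
      ((i4.const_mul _).add ((i5.const_mul _).add (i6.const_mul _)))))
  have habs : |∫ u in Set.Ioi (1:ℝ),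
        (2 * u ^ ((3:ℝ)/2) - (3/2) * u ^ ((5:ℝ)/2) + (3/16) * u ^ ((7:ℝ)/2)
          + (1/64) * u ^ ((9:ℝ)/2) + (3/1024) * u ^ ((11:ℝ)/2)
          + (3/4096) * u ^ ((13:ℝ)/2)) * Real.exp (-(s * u))|
      ≤ ∫ u in Set.Ioi (1:ℝ), g u := by
    rw [← Real.norm_eq_abs]
    apply norm_integral_le_of_norm_le hgint
    filter_upwards [self_mem_ae_restrict (measurableSet_Ioi : MeasurableSet (Set.Ioi (1:ℝ)))]
      with u hu
    have hu0 : (0 : ℝ) < u := lt_trans zero_lt_one hu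
    have n1 : (0:ℝ) ≤ u ^ ((3:ℝ)/2) := Real.rpow_nonneg hu0.le _
    have n2 : (0:ℝ) ≤ u ^ ((5:ℝ)/2) := Real.rpow_nonneg hu0.le _
    have n3 : (0:ℝ) ≤ u ^ ((7:ℝ)/2) := Real.rpow_nonneg hu0.le _
    have n4 : (0:ℝ) ≤ u ^ ((9:ℝ)/2) := Real.rpow_nonneg hu0.le _
    have n5 : (0:ℝ) ≤ u ^ ((11:ℝ)/2) := Real.rpow_nonneg hu0.le _
    have n6 : (0:ℝ) ≤ u ^ ((13:ℝ)/2) := Real.rpow_nonneg hu0.le _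
    have he : (0:ℝ) ≤ Real.exp (-(s * u)) := (Real.exp_pos _).le
    rw [Real.norm_eq_abs, abs_mul, abs_of_nonneg he]
    have hP : |2 * u ^ ((3:ℝ)/2) - (3/2) * u ^ ((5:ℝ)/2) + (3/16) * u ^ ((7:ℝ)/2)
          + (1/64) * u ^ ((9:ℝ)/2) + (3/1024) * u ^ ((11:ℝ)/2)
          + (3/4096) * u ^ ((13:ℝ)/2)|
        ≤ 2 * u ^ ((3:ℝ)/2) + (3/2) * u ^ ((5:ℝ)/2) + (3/16) * u ^ ((7:ℝ)/2)
          + (1/64) * u ^ ((9:ℝ)/2) + (3/1024) * u ^ ((11:ℝ)/2)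
          + (3/4096) * u ^ ((13:ℝ)/2) := by
      rw [abs_le]
      constructor <;> nlinarith
    calc _ ≤ (2 * u ^ ((3:ℝ)/2) + (3/2) * u ^ ((5:ℝ)/2) + (3/16) * u ^ ((7:ℝ)/2)
          + (1/64) * u ^ ((9:ℝ)/2) + (3/1024) * u ^ ((11:ℝ)/2)
          + (3/4096) * u ^ ((13:ℝ)/2)) * Real.exp (-(s * u)) :=
            mul_le_mul_of_nonneg_right hP he
      _ = g u := by rw [hg_def]; ring
  have i56 : IntegrableOn (fun u : ℝ => (3/1024) * (u ^ ((11:ℝ)/2) * Real.exp (-(s * u)))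
      + (3/4096) * (u ^ ((13:ℝ)/2) * Real.exp (-(s * u)))) (Set.Ioi 1) :=
    (i5.const_mul _).add (i6.const_mul _)
  have i46 : IntegrableOn (fun u : ℝ => (1/64) * (u ^ ((9:ℝ)/2) * Real.exp (-(s * u)))
      + ((3/1024) * (u ^ ((11:ℝ)/2) * Real.exp (-(s * u)))
      + (3/4096) * (u ^ ((13:ℝ)/2) * Real.exp (-(s * u))))) (Set.Ioi 1) :=
    (i4.const_mul _).add i56
  have i36 : IntegrableOn (fun u : ℝ => (3/16) * (u ^ ((7:ℝ)/2) * Real.exp (-(s * u)))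
      + ((1/64) * (u ^ ((9:ℝ)/2) * Real.exp (-(s * u)))
      + ((3/1024) * (u ^ ((11:ℝ)/2) * Real.exp (-(s * u)))
      + (3/4096) * (u ^ ((13:ℝ)/2) * Real.exp (-(s * u)))))) (Set.Ioi 1) :=
    (i3.const_mul _).add i46
  have i26 : IntegrableOn (fun u : ℝ => (3/2) * (u ^ ((5:ℝ)/2) * Real.exp (-(s * u)))
      + ((3/16) * (u ^ ((7:ℝ)/2) * Real.exp (-(s * u)))
      + ((1/64) * (u ^ ((9:ℝ)/2) * Real.exp (-(s * u)))
      + ((3/1024) * (u ^ ((11:ℝ)/2) * Real.exp (-(s * u)))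
      + (3/4096) * (u ^ ((13:ℝ)/2) * Real.exp (-(s * u))))))) (Set.Ioi 1) :=
    (i2.const_mul _).add i36
  have h56 : ∫ u in Set.Ioi (1:ℝ), ((3/1024) * (u ^ ((11:ℝ)/2) * Real.exp (-(s * u)))
      + (3/4096) * (u ^ ((13:ℝ)/2) * Real.exp (-(s * u))))
      = (3/1024) * (∫ u in Set.Ioi (1:ℝ), u ^ ((11:ℝ)/2) * Real.exp (-(s * u)))
      + (3/4096) * (∫ u in Set.Ioi (1:ℝ), u ^ ((13:ℝ)/2) * Real.exp (-(s * u))) := by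
    rw [integral_add (i5.const_mul _) (i6.const_mul _), integral_const_mul, integral_const_mul]
  have h46 : ∫ u in Set.Ioi (1:ℝ), ((1/64) * (u ^ ((9:ℝ)/2) * Real.exp (-(s * u)))
      + ((3/1024) * (u ^ ((11:ℝ)/2) * Real.exp (-(s * u)))
      + (3/4096) * (u ^ ((13:ℝ)/2) * Real.exp (-(s * u)))))
      = (1/64) * (∫ u in Set.Ioi (1:ℝ), u ^ ((9:ℝ)/2) * Real.exp (-(s * u)))
      + ((3/1024) * (∫ u in Set.Ioi (1:ℝ), u ^ ((11:ℝ)/2) * Real.exp (-(s * u)))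
      + (3/4096) * (∫ u in Set.Ioi (1:ℝ), u ^ ((13:ℝ)/2) * Real.exp (-(s * u)))) := by
    rw [integral_add (i4.const_mul _) i56, integral_const_mul, h56]
  have h36 : ∫ u in Set.Ioi (1:ℝ), ((3/16) * (u ^ ((7:ℝ)/2) * Real.exp (-(s * u)))
      + ((1/64) * (u ^ ((9:ℝ)/2) * Real.exp (-(s * u)))
      + ((3/1024) * (u ^ ((11:ℝ)/2) * Real.exp (-(s * u)))
      + (3/4096) * (u ^ ((13:ℝ)/2) * Real.exp (-(s * u))))))
      = (3/16) * (∫ u in Set.Ioi (1:ℝ), u ^ ((7:ℝ)/2) * Real.exp (-(s * u)))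
      + ((1/64) * (∫ u in Set.Ioi (1:ℝ), u ^ ((9:ℝ)/2) * Real.exp (-(s * u)))
      + ((3/1024) * (∫ u in Set.Ioi (1:ℝ), u ^ ((11:ℝ)/2) * Real.exp (-(s * u)))
      + (3/4096) * (∫ u in Set.Ioi (1:ℝ), u ^ ((13:ℝ)/2) * Real.exp (-(s * u))))) := by
    rw [integral_add (i3.const_mul _) i46, integral_const_mul, h46]
  have h26 : ∫ u in Set.Ioi (1:ℝ), ((3/2) * (u ^ ((5:ℝ)/2) * Real.exp (-(s * u)))
      + ((3/16) * (u ^ ((7:ℝ)/2) * Real.exp (-(s * u)))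
      + ((1/64) * (u ^ ((9:ℝ)/2) * Real.exp (-(s * u)))
      + ((3/1024) * (u ^ ((11:ℝ)/2) * Real.exp (-(s * u)))
      + (3/4096) * (u ^ ((13:ℝ)/2) * Real.exp (-(s * u)))))))
      = (3/2) * (∫ u in Set.Ioi (1:ℝ), u ^ ((5:ℝ)/2) * Real.exp (-(s * u)))
      + ((3/16) * (∫ u in Set.Ioi (1:ℝ), u ^ ((7:ℝ)/2) * Real.exp (-(s * u)))
      + ((1/64) * (∫ u in Set.Ioi (1:ℝ), u ^ ((9:ℝ)/2) * Real.exp (-(s * u)))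
      + ((3/1024) * (∫ u in Set.Ioi (1:ℝ), u ^ ((11:ℝ)/2) * Real.exp (-(s * u)))
      + (3/4096) * (∫ u in Set.Ioi (1:ℝ), u ^ ((13:ℝ)/2) * Real.exp (-(s * u)))))) := by
    rw [integral_add (i2.const_mul _) i36, integral_const_mul, h36]
  have hsplit : ∫ u in Set.Ioi (1:ℝ), g u
      = 2 * (∫ u in Set.Ioi (1:ℝ), u ^ ((3:ℝ)/2) * Real.exp (-(s * u)))
      + ((3/2) * (∫ u in Set.Ioi (1:ℝ), u ^ ((5:ℝ)/2) * Real.exp (-(s * u)))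
      + ((3/16) * (∫ u in Set.Ioi (1:ℝ), u ^ ((7:ℝ)/2) * Real.exp (-(s * u)))
      + ((1/64) * (∫ u in Set.Ioi (1:ℝ), u ^ ((9:ℝ)/2) * Real.exp (-(s * u)))
      + ((3/1024) * (∫ u in Set.Ioi (1:ℝ), u ^ ((11:ℝ)/2) * Real.exp (-(s * u)))
      + (3/4096) * (∫ u in Set.Ioi (1:ℝ), u ^ ((13:ℝ)/2) * Real.exp (-(s * u))))))) := by
    rw [hg_def]
    rw [integral_add (i1.const_mul _) i26, integral_const_mul, h26]
  have j1 := J_le ((3:ℝ)/2) s (by norm_num) (by linarith)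
  have j2 := J_le ((5:ℝ)/2) s (by norm_num) (by linarith)
  have j3 := J_le ((7:ℝ)/2) s (by norm_num) (by linarith)
  have j4 := J_le ((9:ℝ)/2) s (by norm_num) (by linarith)
  have j5 := J_le ((11:ℝ)/2) s (by norm_num) (by linarith)
  have j6 := J_le ((13:ℝ)/2) s (by norm_num) (by linarith)
  have hItot : |∫ u in Set.Ioi (1:ℝ),
        (2 * u ^ ((3:ℝ)/2) - (3/2) * u ^ ((5:ℝ)/2) + (3/16) * u ^ ((7:ℝ)/2)
          + (1/64) * u ^ ((9:ℝ)/2) + (3/1024) * u ^ ((11:ℝ)/2)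
          + (3/4096) * u ^ ((13:ℝ)/2)) * Real.exp (-(s * u))|
      ≤ (91785/8192) * (Real.exp (-s) / s) := by
    rw [hsplit] at habs
    set E := Real.exp (-s) / s with hE_def
    linarith
  have hA : (0:ℝ) ≤ Real.sqrt 2 * s^2 * Real.exp s / (3 * π) := by positivity
  rw [abs_mul, abs_of_nonneg hA]
  refine le_trans (mul_le_mul_of_nonneg_left hItot hA) (le_of_eq ?_)
  have h2' : Real.sqrt 2 ≠ 0 := by positivity
  have hπ : π ≠ 0 := Real.pi_ne_zero
  have hs' : s ≠ 0 := hs0.ne'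
  have hexp : Real.exp s ≠ 0 := (Real.exp_pos s).ne'
  rw [Real.exp_neg]
  field_simp
  ring_nf
  rw [Real.sq_sqrt (by norm_num : (0:ℝ) ≤ 2)]
  ring
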